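/- arXiv:2506.24080 — 2 statements merged into one kernel-verified Lean document; each statement's English description precedes it below -/
import Mathlib

section
/- A finite simple graph G admits a link-irregular labeling if and only if for all distinct vertices x, y of G, at least one of the following holds: (a) L(x) ≇ L(y), or (b) both (i) N_a(x) ≠ N_a(y) and (ii) for each integer n ≥ 0, at most one vertex x of G has link L(x) isomorphic to the edgeless graph on n vertices. -/
open SimpleGraph

variable {V : Type*}

/-- Two vertices have isomorphic labeled links: an equivalence of neighborhoods preserving
adjacency and edge labels. -/
def LabeledLinkIso (G : SimpleGraph V) (ℓ : Sym2 V → ℕ+) (u v : V) : Prop :=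
  ∃ e : (G.neighborSet u) ≃ (G.neighborSet v),
    (∀ a b : G.neighborSet u, G.Adj a.1 b.1 ↔ G.Adj (e a).1 (e b).1) ∧
    (∀ a b : G.neighborSet u, G.Adj a.1 b.1 → ℓ s(a.1, b.1) = ℓ s((e a).1, (e b).1))

/-- An edge labeling is link-irregular if distinct vertices have non-isomorphic labeled links. -/
def IsLinkIrregular (G : SimpleGraph V) (ℓ : Sym2 V → ℕ+) : Prop :=
  ∀ u v : V, u ≠ v → ¬ LabeledLinkIso G ℓ u v

/-- A graph admits a link-irregular labeling. -/
def HasLinkIrregularLabeling (G : SimpleGraph V) : Prop :=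
  ∃ ℓ : Sym2 V → ℕ+, IsLinkIrregular G ℓ

/-- The link-irregular labeling number η(G): the minimum number of distinct labels used
on the edges of G over all link-irregular labelings, or ∞ if none exists. -/
noncomputable def linkIrregularNumber (G : SimpleGraph V) : ℕ∞ :=
  sInf {c : ℕ∞ | ∃ ℓ : Sym2 V → ℕ+, IsLinkIrregular G ℓ ∧ c = ((ℓ '' G.edgeSet).ncard : ℕ∞)}

/-- The edge set of the link of x, viewed as a set of edges of G. -/
def linkEdgeSet (G : SimpleGraph V) (x : V) : Set (Sym2 V) :=
  {e | e ∈ G.edgeSet ∧ ∀ v ∈ e, v ∈ G.neighborSet x}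

/-- Active neighborhood. -/
def activeNeighborSet (G : SimpleGraph V) (x : V) : Set V :=
  {u ∈ G.neighborSet x | ∃ w ∈ G.neighborSet x, G.Adj u w}

/-- A graph is cut-irregular if distinct vertex-deleted subgraphs are non-isomorphic. -/
def CutIrregular (H : SimpleGraph V) : Prop :=
  ∀ u v : V, u ≠ v → ¬ Nonempty ((H.induce ({u} : Set V)ᶜ) ≃g (H.induce ({v} : Set V)ᶜ))

/-- The wheel graph W_n: a cycle C_n together with a universal vertex. -/
def wheelGraph (n : ℕ) : SimpleGraph (Option (Fin n)) where
  Adj x y :=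
    match x, y with
    | none, none => False
    | none, some _ => True
    | some _, none => True
    | some i, some j => (cycleGraph n).Adj i j
  symm := by
    constructor
    rintro (_|i) (_|j) h
    · exact h
    · trivial
    · trivial
    · exact (cycleGraph n).adj_symm h
  loopless := by
    constructor
    rintro (_|i) h
    · exact h
    · exact (cycleGraph n).loopless.irrefl i h

/-- The join of two graphs. -/
def graphJoin {W : Type*} (G : SimpleGraph V) (H : SimpleGraph W) : SimpleGraph (V ⊕ W) where
  Adj x y :=
    match x, y with
    | Sum.inl a, Sum.inl b => G.Adj a b
    | Sum.inr a, Sum.inr b => H.Adj a b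
    | _, _ => True
  symm := by
    constructor
    rintro (a|a) (b|b) h
    · exact G.adj_symm h
    · trivial
    · trivial
    · exact H.adj_symm h
  loopless := by
    constructor
    rintro (a|a) h
    · exact G.loopless.irrefl a h
    · exact H.loopless.irrefl a h

/-- The hypercube graph Q_n. -/
def hypercubeGraph (n : ℕ) : SimpleGraph (Fin n → Bool) where
  Adj x y := (Finset.univ.filter fun i => x i ≠ y i).card = 1
  symm := by
    constructor
    intro x y h
    have : (Finset.univ.filter fun i => y i ≠ x i) = (Finset.univ.filter fun i => x i ≠ y i) := by
      apply Finset.filter_congr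
      intro i _
      simp [ne_comm]
    rw [this]
    exact h
  loopless := by
    constructor
    intro x h
    simp at h


private lemma labeled_iso_symm {V : Type*} {G : SimpleGraph V} {ℓ : Sym2 V → ℕ+} {x y : V}
    (h : LabeledLinkIso G ℓ x y) : LabeledLinkIso G ℓ y x := by
  obtain ⟨e, hadj, hlab⟩ := h
  refine ⟨e.symm, fun a b => ?_, fun a b hab => ?_⟩
  · have := hadj (e.symm a) (e.symm b)
    simpa using this.symm
  · have h1 := hadj (e.symm a) (e.symm b)
    simp only [Equiv.apply_symm_apply] at h1
    have h2 := hlab (e.symm a) (e.symm b) (h1.mpr hab)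
    simp only [Equiv.apply_symm_apply] at h2
    exact h2.symm

private lemma active_subset {V : Type*} {G : SimpleGraph V} {ℓ : Sym2 V → ℕ+}
    (hinj : Function.Injective ℓ) {x y : V} (h : LabeledLinkIso G ℓ x y) :
    activeNeighborSet G x ⊆ activeNeighborSet G y := by
  obtain ⟨e, hadj, hlab⟩ := h
  rintro u ⟨hu, w, hw, huw⟩
  have hadj' : G.Adj (e ⟨u, hu⟩).1 (e ⟨w, hw⟩).1 := (hadj _ _).mp huw
  have hs : s(u, w) = s((e ⟨u, hu⟩).1, (e ⟨w, hw⟩).1) := hinj (hlab ⟨u, hu⟩ ⟨w, hw⟩ huw)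
  rw [Sym2.eq_iff] at hs
  rcases hs with ⟨h1, h2⟩ | ⟨h1, h2⟩
  · refine ⟨?_, (e ⟨w, hw⟩).1, (e ⟨w, hw⟩).2, ?_⟩
    · rw [h1]; exact (e ⟨u, hu⟩).2
    · rw [h1]; exact hadj'
  · refine ⟨?_, (e ⟨u, hu⟩).1, (e ⟨u, hu⟩).2, ?_⟩
    · rw [h1]; exact (e ⟨w, hw⟩).2
    · nth_rewrite 1 [h1]; exact hadj'.symm

private lemma labeled_iso_of_edgeless {V : Type*} {G : SimpleGraph V} (ℓ : Sym2 V → ℕ+)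
    {n : ℕ} {a b : V}
    (ha : Nonempty ((G.induce (G.neighborSet a)) ≃g (⊥ : SimpleGraph (Fin n))))
    (hb : Nonempty ((G.induce (G.neighborSet b)) ≃g (⊥ : SimpleGraph (Fin n)))) :
    LabeledLinkIso G ℓ a b := by
  obtain ⟨φ⟩ := ha
  obtain ⟨ψ⟩ := hb
  have hA : ∀ u v : G.neighborSet a, ¬ G.Adj u.1 v.1 := by
    intro u v h
    exact φ.map_rel_iff.mpr h
  have hB : ∀ u v : G.neighborSet b, ¬ G.Adj u.1 v.1 := by
    intro u v h
    exact ψ.map_rel_iff.mpr h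
  refine ⟨φ.toEquiv.trans ψ.toEquiv.symm, fun u v => ?_, fun u v h => absurd h (hA u v)⟩
  constructor
  · intro h; exact absurd h (hA u v)
  · intro h; exact absurd h (hB _ _)

private lemma labeled_iso_of_active_eq {V : Type*} [Fintype V] {G : SimpleGraph V}
    (ℓ : Sym2 V → ℕ+) {x y : V}
    (hiso : Nonempty ((G.induce (G.neighborSet x)) ≃g (G.induce (G.neighborSet y))))
    (hNa : activeNeighborSet G x = activeNeighborSet G y) :
    LabeledLinkIso G ℓ x y := by
  classical
  obtain ⟨φ⟩ := hiso
  set A := activeNeighborSet G x with hAdef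
  have hAx : A ⊆ G.neighborSet x := fun u hu => hu.1
  have hAy : A ⊆ G.neighborSet y := fun u hu => by
    have : u ∈ activeNeighborSet G y := hNa ▸ hu
    exact this.1
  have hcard : Fintype.card (G.neighborSet x) = Fintype.card (G.neighborSet y) :=
    Fintype.card_congr φ.toEquiv
  have hdiff : Fintype.card ((G.neighborSet x \ A : Set V)) =
      Fintype.card ((G.neighborSet y \ A : Set V)) := by
    have h1 := Fintype.card_congr (Equiv.Set.sumDiffSubset hAx)
    have h2 := Fintype.card_congr (Equiv.Set.sumDiffSubset hAy)
    rw [Fintype.card_sum] at h1 h2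
    omega
  let f : ((G.neighborSet x \ A : Set V)) ≃ ((G.neighborSet y \ A : Set V)) :=
    Fintype.equivOfCardEq hdiff
  let e : (G.neighborSet x) ≃ (G.neighborSet y) :=
    (Equiv.Set.sumDiffSubset hAx).symm.trans
      ((Equiv.sumCongr (Equiv.refl A) f).trans (Equiv.Set.sumDiffSubset hAy))
  have he_mem : ∀ (u : G.neighborSet x), u.1 ∈ A → (e u).1 = u.1 := by
    intro u h
    have : e u = Equiv.Set.sumDiffSubset hAy (Sum.inl ⟨u.1, h⟩) := by
      simp [e, Equiv.Set.sumDiffSubset_symm_apply_of_mem hAx h]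
    rw [this, Equiv.Set.sumDiffSubset_apply_inl]
  have he_not : ∀ (u : G.neighborSet x), u.1 ∉ A → (e u).1 ∉ A := by
    intro u h
    have : e u = Equiv.Set.sumDiffSubset hAy (Sum.inr (f ⟨u.1, ⟨u.2, h⟩⟩)) := by
      simp [e, Equiv.Set.sumDiffSubset_symm_apply_of_notMem hAx h]
    rw [this, Equiv.Set.sumDiffSubset_apply_inr]
    exact (f ⟨u.1, ⟨u.2, h⟩⟩).2.2
  have hactx : ∀ u v : G.neighborSet x, G.Adj u.1 v.1 → u.1 ∈ A :=
    fun u v h => ⟨u.2, v.1, v.2, h⟩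
  refine ⟨e, fun u v => ?_, fun u v h => ?_⟩
  · constructor
    · intro h
      rw [he_mem u (hactx u v h), he_mem v (hactx v u h.symm)]
      exact h
    · intro h
      have heu : (e u).1 ∈ A := hNa ▸ (⟨(e u).2, (e v).1, (e v).2, h⟩ :
        (e u).1 ∈ activeNeighborSet G y)
      have hev : (e v).1 ∈ A := hNa ▸ (⟨(e v).2, (e u).1, (e u).2, h.symm⟩ :
        (e v).1 ∈ activeNeighborSet G y)
      have hu : u.1 ∈ A := by
        by_contra hc
        exact he_not u hc heu
      have hv : v.1 ∈ A := by
        by_contra hc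
        exact he_not v hc hev
      rw [he_mem u hu, he_mem v hv] at h
      exact h
  · rw [he_mem u (hactx u v h), he_mem v (hactx v u h.symm)]

theorem stmt_1 {V : Type*} [Fintype V] (G : SimpleGraph V) :
    HasLinkIrregularLabeling G ↔
      ∀ x y : V, x ≠ y →
        (¬ Nonempty ((G.induce (G.neighborSet x)) ≃g (G.induce (G.neighborSet y)))) ∨
        (activeNeighborSet G x ≠ activeNeighborSet G y ∧
          ∀ n : ℕ, ∀ a b : V,
            Nonempty ((G.induce (G.neighborSet a)) ≃g (⊥ : SimpleGraph (Fin n))) →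
            Nonempty ((G.induce (G.neighborSet b)) ≃g (⊥ : SimpleGraph (Fin n))) →
            a = b) := by
  constructor
  · rintro ⟨ℓ, hℓ⟩ x y hxy
    by_cases hiso : Nonempty ((G.induce (G.neighborSet x)) ≃g (G.induce (G.neighborSet y)))
    · right
      refine ⟨fun hNa => hℓ x y hxy (labeled_iso_of_active_eq ℓ hiso hNa), ?_⟩
      intro n a b ha hb
      by_contra hab
      exact hℓ a b hab (labeled_iso_of_edgeless ℓ ha hb)
    · exact Or.inl hiso
  · intro hcond
    classical
    obtain ⟨f, hf⟩ := Countable.exists_injective_nat (Sym2 V)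
    refine ⟨fun e => (f e).succPNat, fun x y hxy h => ?_⟩
    have hinj : Function.Injective (fun e : Sym2 V => (f e).succPNat) := by
      intro a b hab
      exact hf (Nat.succPNat_inj.mp hab)
    obtain ⟨e, hadj, hlab⟩ := h
    have hgiso : Nonempty ((G.induce (G.neighborSet x)) ≃g (G.induce (G.neighborSet y))) :=
      ⟨⟨e, fun {a b} => (hadj a b).symm⟩⟩
    have hNa : activeNeighborSet G x = activeNeighborSet G y :=
      subset_antisymm (active_subset hinj ⟨e, hadj, hlab⟩)
        (active_subset hinj (labeled_iso_symm ⟨e, hadj, hlab⟩))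
    rcases hcond x y hxy with h1 | h2
    · exact h1 hgiso
    · exact h2.1 hNa
end

section
/- For every n ≥ 4, the cycle graph C_n does not admit a link-irregular labeling. -/
open SimpleGraph

variable {V : Type*}

open Fin.CommRing in
lemma cycle_nonadj_aux (m : ℕ) (u a b : Fin (m+4)) (ha : (SimpleGraph.cycleGraph (m+4)).Adj u a)
    (hb : (SimpleGraph.cycleGraph (m+4)).Adj u b) : ¬ (SimpleGraph.cycleGraph (m+4)).Adj a b := by
  intro hab
  rw [cycleGraph_adj'] at ha hb hab
  have hone : (1 : Fin (m+4)) ≠ 0 := by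
    intro h
    have := congrArg Fin.val h
    simp at this
  have hthree : (3 : Fin (m+4)) ≠ 0 := by
    intro h
    have h3 : ((3 : Fin (m+4))).val = 3 := by
      show (3 % (m+4)) = 3
      exact Nat.mod_eq_of_lt (by omega)
    rw [h] at h3
    simp at h3
  have conv : ∀ x y : Fin (m+4), (x - y).val = 1 → x - y = 1 := fun x y h => Fin.ext h
  rcases ha with h1 | h1 <;> rcases hb with h2 | h2 <;> rcases hab with h3 | h3 <;>
    replace h1 := conv _ _ h1 <;>
    replace h2 := conv _ _ h2 <;> replace h3 := conv _ _ h3 <;>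
    first
      | exact hone (by linear_combination h1 + h2 + h3)
      | exact hone (by linear_combination h1 + h2 - h3)
      | exact hone (by linear_combination h1 - h2 + h3)
      | exact hone (by linear_combination h1 - h2 - h3)
      | exact hone (by linear_combination -h1 + h2 + h3)
      | exact hone (by linear_combination -h1 + h2 - h3)
      | exact hone (by linear_combination -h1 - h2 + h3)
      | exact hone (by linear_combination -h1 - h2 - h3)
      | exact hthree (by linear_combination h1 + h2 + h3)
      | exact hthree (by linear_combination -h1 - h2 - h3)

/-- cycles C_n, n ≥ 4, admit no link-irregular labeling. -/
theorem stmt_4 (n : ℕ) (hn : 4 ≤ n) :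
    ¬ HasLinkIrregularLabeling (SimpleGraph.cycleGraph n) := by
  obtain ⟨m, rfl⟩ : ∃ m, n = m + 4 := ⟨n - 4, by omega⟩
  rintro ⟨ℓ, hℓ⟩
  refine hℓ 0 1 ?_ ?_
  · intro h
    have := congrArg Fin.val h
    simp at this
  · have key : ∀ a b : Fin (m+4),
        (cycleGraph (m+4)).Adj a b ↔ (cycleGraph (m+4)).Adj (a+1) (b+1) := by
      intro a b
      simp [cycleGraph_adj', add_sub_add_right_eq_sub]
    refine ⟨⟨fun x => ⟨x.1 + 1, ?_⟩, fun x => ⟨x.1 - 1, ?_⟩, ?_, ?_⟩, ?_, ?_⟩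
    · have := x.2
      rw [mem_neighborSet] at this ⊢
      have h := (key 0 x.1).mp this
      simpa using h
    · have := x.2
      rw [mem_neighborSet] at this ⊢
      rw [key 0 (x.1 - 1)]
      simpa using this
    · intro x; apply Subtype.ext; simp
    · intro x; apply Subtype.ext; simp
    · intro a b
      exact key a.1 b.1
    · intro a b hab
      exact absurd hab (cycle_nonadj_aux m 0 a.1 b.1 a.2 b.2)
end
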